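/- Let (λ_n)_{n≥1} and (μ_n)_{n≥1} be sequences of strictly positive reals, let λ > 0, and let n₀ ≥ 1 be such that λ_n ≥ λ·n for all n ≥ 1 and a_n := λ_n/μ_n < 1 for all n ≥ n₀. Then Σ_{n≥n₀} Σ_{k≥n+1} (a_{n+1}·a_{n+2}⋯a_k)/λ_k ≤ (1/λ) Σ_{i≥n₀+1} λ_i/(i·(μ_i − λ_i)) (as an inequality in [0,∞]). -/

import Mathlib

open MeasureTheory Set

lemma amgm_pow (s : Finset ℕ) (hs : s.Nonempty) (b : ℕ → ℝ) (hb : ∀ i ∈ s, 0 ≤ b i) :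
    ∏ i ∈ s, b i ≤ (∑ i ∈ s, b i ^ s.card) / s.card := by
  have hp : 0 < (s.card : ℝ) := by exact_mod_cast Finset.card_pos.mpr hs
  have h := Real.geom_mean_le_arith_mean_weighted s (fun _ => (s.card : ℝ)⁻¹)
      (fun i => b i ^ s.card) (fun i _ => by positivity)
      (by rw [Finset.sum_const, nsmul_eq_mul, mul_inv_cancel₀ hp.ne'])
      (fun i hi => pow_nonneg (hb i hi) _)
  calc ∏ i ∈ s, b i = ∏ i ∈ s, (b i ^ s.card) ^ (s.card : ℝ)⁻¹ := by
        refine Finset.prod_congr rfl fun i hi => ?_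
        rw [← Real.rpow_natCast (b i) s.card, ← Real.rpow_mul (hb i hi),
            mul_inv_cancel₀ hp.ne', Real.rpow_one]
    _ ≤ ∑ i ∈ s, (s.card : ℝ)⁻¹ * b i ^ s.card := h
    _ = (∑ i ∈ s, b i ^ s.card) / s.card := by
        rw [← Finset.mul_sum, inv_mul_eq_div]

set_option maxHeartbeats 1000000 in
/-- For positive sequences `λ_n, μ_n` with `λ_n ≥ λ n` and
`a_n := λ_n/μ_n < 1` for `n ≥ n₀`, one has
`Σ_{n≥n₀} Σ_{k≥n+1} (a_{n+1}⋯a_k)/λ_k ≤ (1/λ) Σ_{i≥n₀+1} λ_i/(i(μ_i-λ_i))` in `[0,∞]`. -/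
theorem stmt8 (lamn mun : ℕ → ℝ)
    (hlampos : ∀ n : ℕ, 1 ≤ n → 0 < lamn n) (hmupos : ∀ n : ℕ, 1 ≤ n → 0 < mun n)
    (lam : ℝ) (hlam : 0 < lam) (n₀ : ℕ) (hn₀ : 1 ≤ n₀)
    (hlb : ∀ n : ℕ, 1 ≤ n → lam * n ≤ lamn n)
    (ha : ∀ n : ℕ, n₀ ≤ n → lamn n / mun n < 1) :
    (∑' m : ℕ, ∑' j : ℕ,
        ENNReal.ofReal
          ((∏ i ∈ Finset.Icc (n₀ + m + 1) (n₀ + m + 1 + j), lamn i / mun i) /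
            lamn (n₀ + m + 1 + j))) ≤
      ENNReal.ofReal (1 / lam) *
        ∑' m : ℕ, ENNReal.ofReal (lamn (n₀ + 1 + m) /
          (((n₀ + 1 + m : ℕ) : ℝ) * (mun (n₀ + 1 + m) - lamn (n₀ + 1 + m)))) := by
  classical
  set a : ℕ → ℝ := fun i => lamn i / mun i with ha_def
  have hapos : ∀ i : ℕ, 1 ≤ i → 0 < a i := fun i hi => div_pos (hlampos i hi) (hmupos i hi)
  set U : ℕ → ℕ → ENNReal := fun i j =>
    ENNReal.ofReal (a i ^ (j + 1) / (((j : ℝ) + 1) * lam * (i : ℝ))) with hU_def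
  set V : ℕ → ℕ → ℕ → ENNReal := fun m j i =>
    if n₀ + m + 1 ≤ i ∧ i ≤ n₀ + m + 1 + j then U i j else 0 with hV_def
  -- Step A : pointwise bound via AM-GM
  have stepA : ∀ m j : ℕ,
      ENNReal.ofReal ((∏ i ∈ Finset.Icc (n₀ + m + 1) (n₀ + m + 1 + j), a i) /
          lamn (n₀ + m + 1 + j)) ≤ ∑' i : ℕ, V m j i := by
    intro m j
    set s : Finset ℕ := Finset.Icc (n₀ + m + 1) (n₀ + m + 1 + j) with hs_def
    have hcard : s.card = j + 1 := by rw [hs_def, Nat.card_Icc]; omega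
    have hne : s.Nonempty := ⟨n₀ + m + 1, by simp [hs_def, Finset.mem_Icc]⟩
    have hmem : ∀ i ∈ s, n₀ + m + 1 ≤ i ∧ i ≤ n₀ + m + 1 + j := by
      intro i hi; exact Finset.mem_Icc.mp hi
    have hb : ∀ i ∈ s, 0 ≤ a i := fun i hi => (hapos i (by have := (hmem i hi).1; omega)).le
    have hAM := amgm_pow s hne a hb
    rw [hcard] at hAM
    have hk1 : 1 ≤ n₀ + m + 1 + j := by omega
    have hlamk : 0 < lamn (n₀ + m + 1 + j) := hlampos _ hk1
    have hreal : (∏ i ∈ s, a i) / lamn (n₀ + m + 1 + j) ≤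
        ∑ i ∈ s, a i ^ (j + 1) / (((j : ℝ) + 1) * lam * (i : ℝ)) := by
      calc (∏ i ∈ s, a i) / lamn (n₀ + m + 1 + j)
          ≤ ((∑ i ∈ s, a i ^ (j + 1)) / ((j : ℝ) + 1)) / lamn (n₀ + m + 1 + j) := by
            apply div_le_div_of_nonneg_right ?_ hlamk.le
            · exact_mod_cast hAM
        _ = ∑ i ∈ s, a i ^ (j + 1) / (((j : ℝ) + 1) * lamn (n₀ + m + 1 + j)) := by
            rw [div_div, Finset.sum_div]
        _ ≤ ∑ i ∈ s, a i ^ (j + 1) / (((j : ℝ) + 1) * lam * (i : ℝ)) := by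
            apply Finset.sum_le_sum
            intro i hi
            have hik : (i : ℝ) ≤ ((n₀ + m + 1 + j : ℕ) : ℝ) := by
              exact_mod_cast (hmem i hi).2
            have hi1 : (1 : ℕ) ≤ i := by have := (hmem i hi).1; omega
            have hipos : (0 : ℝ) < i := by exact_mod_cast hi1
            have hden : ((j : ℝ) + 1) * lam * (i : ℝ) ≤
                ((j : ℝ) + 1) * lamn (n₀ + m + 1 + j) := by
              have h1 : lam * (i : ℝ) ≤ lam * ((n₀ + m + 1 + j : ℕ) : ℝ) := by
                exact mul_le_mul_of_nonneg_left hik hlam.le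
              have h2 := hlb _ hk1
              calc ((j : ℝ) + 1) * lam * (i : ℝ) = ((j : ℝ) + 1) * (lam * (i : ℝ)) := by ring
                _ ≤ ((j : ℝ) + 1) * lamn (n₀ + m + 1 + j) := by
                    apply mul_le_mul_of_nonneg_left (h1.trans h2) (by positivity)
            apply div_le_div_of_nonneg_left (pow_nonneg (hb i hi) _) (by positivity) hden
    calc ENNReal.ofReal ((∏ i ∈ s, a i) / lamn (n₀ + m + 1 + j))
        ≤ ENNReal.ofReal (∑ i ∈ s, a i ^ (j + 1) / (((j : ℝ) + 1) * lam * (i : ℝ))) :=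
          ENNReal.ofReal_le_ofReal hreal
      _ = ∑ i ∈ s, U i j := by
          rw [ENNReal.ofReal_sum_of_nonneg]
          intro i hi
          have hi1 : (1 : ℕ) ≤ i := by have := (hmem i hi).1; omega
          have hipos : (0:ℝ) < i := by exact_mod_cast hi1
          exact div_nonneg (pow_nonneg (hb i hi) _) (by positivity)
      _ = ∑' i : ℕ, V m j i := by
          rw [tsum_eq_sum (s := s)]
          · apply Finset.sum_congr rfl
            intro i hi
            simp only [hV_def, if_pos (hmem i hi)]
          · intro i hi
            simp only [hV_def, if_neg (fun h => hi (Finset.mem_Icc.mpr h))]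
  -- Step D: counting bound
  have stepD : ∀ i j : ℕ, (∑' m : ℕ, V m j i) ≤
      (if n₀ + 1 ≤ i then ((j + 1 : ℕ) : ENNReal) * U i j else 0) := by
    intro i j
    by_cases hi : n₀ + 1 ≤ i
    · rw [if_pos hi]
      have hsum : (∑' m : ℕ, V m j i)
          = ∑ m ∈ Finset.Icc (i - n₀ - 1 - j) (i - n₀ - 1), V m j i := by
        apply tsum_eq_sum
        intro m hm
        simp only [hV_def]
        rw [if_neg]
        rintro ⟨h1, h2⟩
        exact hm (Finset.mem_Icc.mpr (by omega))
      rw [hsum]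
      calc ∑ m ∈ Finset.Icc (i - n₀ - 1 - j) (i - n₀ - 1), V m j i
          ≤ ∑ _m ∈ Finset.Icc (i - n₀ - 1 - j) (i - n₀ - 1), U i j := by
            apply Finset.sum_le_sum; intro m _
            simp only [hV_def]; split
            · exact le_refl _
            · exact zero_le
        _ = ((Finset.Icc (i - n₀ - 1 - j) (i - n₀ - 1)).card : ENNReal) * U i j := by
            rw [Finset.sum_const, nsmul_eq_mul]
        _ ≤ ((j + 1 : ℕ) : ENNReal) * U i j := by
            apply mul_le_mul_left
            exact Nat.cast_le.mpr (by rw [Nat.card_Icc]; omega)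
    · rw [if_neg hi]
      have hz : ∀ m, V m j i = 0 := by
        intro m
        simp only [hV_def]
        rw [if_neg]
        rintro ⟨h1, _⟩; omega
      simp [hz]
  -- geometric series computation
  have hgeom : ∀ i : ℕ, n₀ + 1 ≤ i →
      (∑' j : ℕ, ((j + 1 : ℕ) : ENNReal) * U i j) ≤
        ENNReal.ofReal (1 / lam) *
          ENNReal.ofReal (lamn i / ((i : ℝ) * (mun i - lamn i))) := by
    intro i hi
    have hi1 : (1 : ℕ) ≤ i := by omega
    have hipos : (0 : ℝ) < i := by exact_mod_cast hi1
    have hb0 : 0 ≤ a i := (hapos i hi1).le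
    have hb1 : a i < 1 := ha i (by omega)
    have hmu : 0 < mun i := hmupos i hi1
    have hml : lamn i < mun i := by
      have := (div_lt_one hmu).mp hb1
      exact this
    set c : ℝ := 1 / (lam * i) with hc_def
    have hterm : ∀ j : ℕ, ((j + 1 : ℕ) : ENNReal) * U i j
        = ENNReal.ofReal (a i ^ (j + 1) * c) := by
      intro j
      rw [← ENNReal.ofReal_natCast, ← ENNReal.ofReal_mul (Nat.cast_nonneg _)]
      congr 1
      push_cast
      rw [hc_def]
      field_simp
    have hsummable : Summable (fun j : ℕ => a i ^ (j + 1) * c) := by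
      have heq : (fun j : ℕ => a i ^ (j + 1) * c) = fun j : ℕ => a i ^ j * (a i * c) := by
        funext j; ring
      rw [heq]
      exact (summable_geometric_of_lt_one hb0 hb1).mul_right _
    have htsum : (∑' j : ℕ, a i ^ (j + 1) * c) = (1 - a i)⁻¹ * (a i * c) := by
      have heq : (fun j : ℕ => a i ^ (j + 1) * c) = fun j : ℕ => a i ^ j * (a i * c) := by
        funext j; ring
      rw [heq, tsum_mul_right, tsum_geometric_of_lt_one hb0 hb1]
    calc (∑' j : ℕ, ((j + 1 : ℕ) : ENNReal) * U i j)
        = ∑' j : ℕ, ENNReal.ofReal (a i ^ (j + 1) * c) := tsum_congr hterm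
      _ = ENNReal.ofReal (∑' j : ℕ, a i ^ (j + 1) * c) :=
          (ENNReal.ofReal_tsum_of_nonneg
            (fun j => mul_nonneg (pow_nonneg hb0 _) (by positivity)) hsummable).symm
      _ ≤ ENNReal.ofReal (1 / lam) *
            ENNReal.ofReal (lamn i / ((i : ℝ) * (mun i - lamn i))) := by
          rw [← ENNReal.ofReal_mul (by positivity : (0:ℝ) ≤ 1 / lam)]
          apply ENNReal.ofReal_le_ofReal
          rw [htsum, hc_def]
          have h1b : 0 < 1 - a i := by linarith
          have hml' : 0 < mun i - lamn i := by linarith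
          have h1 : mun i ≠ 0 := hmu.ne'
          have h2 : mun i - lamn i ≠ 0 := hml'.ne'
          have h3 : lam ≠ 0 := hlam.ne'
          have h4 : (i : ℝ) ≠ 0 := hipos.ne'
          have h5 : (1 : ℝ) - a i ≠ 0 := h1b.ne'
          apply le_of_eq
          simp only [ha_def] at h5 ⊢
          field_simp
  -- assemble everything
  have hWbound : ∀ i : ℕ, (∑' j : ℕ, ∑' m : ℕ, V m j i) ≤
      (if n₀ + 1 ≤ i then ∑' j : ℕ, ((j + 1 : ℕ) : ENNReal) * U i j else 0) := by
    intro i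
    by_cases hi : n₀ + 1 ≤ i
    · rw [if_pos hi]
      exact ENNReal.tsum_le_tsum fun j => (stepD i j).trans_eq (if_pos hi)
    · rw [if_neg hi]
      calc (∑' j : ℕ, ∑' m : ℕ, V m j i) ≤ ∑' _j : ℕ, (0 : ENNReal) :=
            ENNReal.tsum_le_tsum fun j => (stepD i j).trans_eq (if_neg hi)
        _ = 0 := by simp
  set g : ℕ → ENNReal := fun i =>
    if n₀ + 1 ≤ i then ∑' j : ℕ, ((j + 1 : ℕ) : ENNReal) * U i j else 0 with hg_def
  have hshift : (∑' i : ℕ, g i)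
      = ∑' m : ℕ, ∑' j : ℕ, ((j + 1 : ℕ) : ENNReal) * U (n₀ + 1 + m) j := by
    rw [← Function.Injective.tsum_eq (g := fun m : ℕ => n₀ + 1 + m)
        (f := g) (fun x y h => by simp only [] at h; omega) ?_]
    · apply tsum_congr; intro m
      simp only [hg_def]
      rw [if_pos (by omega : n₀ + 1 ≤ n₀ + 1 + m)]
    · intro i hi
      simp only [Function.mem_support, hg_def] at hi
      by_cases h : n₀ + 1 ≤ i
      · exact ⟨i - (n₀ + 1), by simp only []; omega⟩
      · exact absurd (if_neg h) hi
  calc (∑' m : ℕ, ∑' j : ℕ,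
        ENNReal.ofReal
          ((∏ i ∈ Finset.Icc (n₀ + m + 1) (n₀ + m + 1 + j), a i) /
            lamn (n₀ + m + 1 + j)))
      ≤ ∑' m : ℕ, ∑' j : ℕ, ∑' i : ℕ, V m j i :=
        ENNReal.tsum_le_tsum fun m => ENNReal.tsum_le_tsum fun j => stepA m j
    _ = ∑' m : ℕ, ∑' i : ℕ, ∑' j : ℕ, V m j i := tsum_congr fun m => ENNReal.tsum_comm
    _ = ∑' i : ℕ, ∑' m : ℕ, ∑' j : ℕ, V m j i := ENNReal.tsum_comm
    _ = ∑' i : ℕ, ∑' j : ℕ, ∑' m : ℕ, V m j i := tsum_congr fun i => ENNReal.tsum_comm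
    _ ≤ ∑' i : ℕ, g i := ENNReal.tsum_le_tsum hWbound
    _ = ∑' m : ℕ, ∑' j : ℕ, ((j + 1 : ℕ) : ENNReal) * U (n₀ + 1 + m) j := hshift
    _ ≤ ∑' m : ℕ, ENNReal.ofReal (1 / lam) *
          ENNReal.ofReal (lamn (n₀ + 1 + m) /
            (((n₀ + 1 + m : ℕ) : ℝ) * (mun (n₀ + 1 + m) - lamn (n₀ + 1 + m)))) :=
        ENNReal.tsum_le_tsum fun m => hgeom (n₀ + 1 + m) (by omega)
    _ = ENNReal.ofReal (1 / lam) *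
          ∑' m : ℕ, ENNReal.ofReal (lamn (n₀ + 1 + m) /
            (((n₀ + 1 + m : ℕ) : ℝ) * (mun (n₀ + 1 + m) - lamn (n₀ + 1 + m)))) :=
        ENNReal.tsum_mul_left
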